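/- There exist unit 3-vectors a, a', b, b' and a function F(a,b) = cos α cos β + ξ sin α sin β (with a ↦ α, b ↦ β parametrizations, ξ > 0) such that |F(a,b) − F(a,b')| + |F(a',b) + F(a',b')| > 2. Specifically, choosing α = 0, α' = π/2, cos β = −cos β' = η, sin β = sin β' = √(1−η²), the expression equals 2(η + ξ√(1−η²)), which exceeds 2 for suitable η ∈ (0,1) whenever ξ > 0. -/

import Mathlib

open Real

/-- The CHSH combination of correlations `F(α,β) = cos α cos β + ξ sin α sin β`
exceeds 2 for any `ξ > 0`: choosing `α = 0`, `α' = π/2`, `cos β = −cos β' = η`,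
`sin β = sin β' = √(1−η²)` (i.e. `β = arccos η`, `β' = arccos (−η)`), the CHSH
expression equals `2(η + ξ√(1−η²))`, which exceeds 2 for a suitable `η ∈ (0,1)`. -/
theorem chsh_violation_exists (ξ : ℝ) (hξ : 0 < ξ) :
    ∃ η : ℝ, 0 < η ∧ η < 1 ∧
      (let F : ℝ → ℝ → ℝ := fun α β => Real.cos α * Real.cos β + ξ * Real.sin α * Real.sin β
       let β := Real.arccos η
       let β' := Real.arccos (-η)
       |F 0 β - F 0 β'| + |F (Real.pi / 2) β + F (Real.pi / 2) β'|
          = 2 * (η + ξ * Real.sqrt (1 - η ^ 2)) ∧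
        2 < 2 * (η + ξ * Real.sqrt (1 - η ^ 2))) := by
  set s := Real.sqrt (1 + ξ ^ 2) with hs
  have hsq : s ^ 2 = 1 + ξ ^ 2 := Real.sq_sqrt (by positivity)
  have hs0 : 0 < s := Real.sqrt_pos.mpr (by positivity)
  have hs1 : 1 < s := by nlinarith
  set η : ℝ := 1 / s with hη
  have hη0 : 0 < η := by positivity
  have hη1 : η < 1 := by rw [hη, div_lt_one hs0]; exact hs1
  have hηle : η ≤ 1 := le_of_lt hη1
  have hηm : (-1 : ℝ) ≤ η := by linarith
  have hsqrt : Real.sqrt (1 - η ^ 2) = ξ / s := by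
    have h1 : 1 - η ^ 2 = (ξ / s) ^ 2 := by
      rw [hη]; field_simp; nlinarith
    rw [h1, Real.sqrt_sq (by positivity)]
  refine ⟨η, hη0, hη1, ?_, ?_⟩
  · simp only
    rw [Real.cos_arccos hηm hηle, Real.cos_arccos (by linarith) (by linarith),
      Real.sin_arccos, Real.sin_arccos, Real.cos_zero, Real.sin_zero,
      Real.cos_pi_div_two, Real.sin_pi_div_two, neg_pow, neg_one_sq, one_mul, hsqrt]
    have h2 : |2 * η| = 2 * η := abs_of_pos (by positivity)
    have h3 : |2 * (ξ * (ξ / s))| = 2 * (ξ * (ξ / s)) := abs_of_pos (by positivity)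
    ring_nf
    ring_nf at h2 h3
    have h4 : Real.sqrt (1 - s⁻¹ ^ 2) = ξ / s := by
      rw [← one_div]; exact hsqrt
    rw [hsqrt, h2]
    rw [abs_of_pos (by positivity : (0:ℝ) < ξ * (ξ / s) + ξ ^ 2 * s⁻¹)]
    field_simp
    ring
  · rw [hsqrt, hη]
    have : 1 / s + ξ * (ξ / s) = s := by
      field_simp; nlinarith
    rw [this]; linarith
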